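/- Let m ≥ 3 be an integer and let n ≥ 10 be a natural number divisible by 4. Let K = {0} ∪ {2^l : 1 ≤ l ≤ m} ∪ {3·2^l : 1 ≤ l ≤ m−1}. Then the set { gcd(3·2^m, 3·2^{m−2}·(n−4) + k) : k ∈ K } has exactly 2m elements. -/

import Mathlib

/-- For `m ≥ 3` and `n ≥ 10` divisible by `4`, the set of minimal Maslov numbers
`gcd(3·2^m, 3·2^{m-2}·(n-4) + k)`, as `k` ranges over
`{0} ∪ {2^l : 1 ≤ l ≤ m} ∪ {3·2^l : 1 ≤ l ≤ m-1}`, has exactly `2m` elements. -/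
theorem stmt13 (m n : ℕ) (hm : 3 ≤ m) (hn : 10 ≤ n) (h4 : 4 ∣ n) :
    ((({0} : Finset ℕ) ∪ (Finset.Icc 1 m).image (fun l => 2 ^ l)
        ∪ (Finset.Icc 1 (m - 1)).image (fun l => 3 * 2 ^ l)).image
      (fun k => Nat.gcd (3 * 2 ^ m) (3 * 2 ^ (m - 2) * (n - 4) + k))).card = 2 * m := by
  obtain ⟨t, ht⟩ : (4 : ℕ) ∣ n - 4 := Nat.dvd_sub h4 (dvd_refl 4)
  have hpow : 3 * 2 ^ (m - 2) * (n - 4) = 3 * 2 ^ m * t := by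
    rw [ht]
    have : 2 ^ (m - 2) * 4 = 2 ^ m := by
      rw [show (4:ℕ) = 2^2 by norm_num, ← pow_add]
      congr 1; omega
    calc 3 * 2 ^ (m-2) * (4 * t) = 3 * (2 ^ (m-2) * 4) * t := by ring
      _ = 3 * 2 ^ m * t := by rw [this]
  have key : ∀ k, Nat.gcd (3 * 2 ^ m) (3 * 2 ^ (m - 2) * (n - 4) + k)
      = Nat.gcd (3 * 2 ^ m) k := by
    intro k
    rw [hpow, add_comm, Nat.gcd_add_mul_left_right]
  simp only [key]
  set K : Finset ℕ := ({0} : Finset ℕ) ∪ (Finset.Icc 1 m).image (fun l => 2 ^ l)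
        ∪ (Finset.Icc 1 (m - 1)).image (fun l => 3 * 2 ^ l) with hK
  have hprop : ∀ k ∈ K, k ≠ 0 → Nat.gcd (3 * 2 ^ m) k = k ∧ k < 3 * 2 ^ m := by
    intro k hk hk0
    simp only [hK, Finset.mem_union, Finset.mem_singleton, Finset.mem_image,
      Finset.mem_Icc] at hk
    rcases hk with (h0 | ⟨l, ⟨hl1, hl2⟩, rfl⟩) | ⟨l, ⟨hl1, hl2⟩, rfl⟩
    · exact absurd h0 hk0
    · constructor
      · exact Nat.gcd_eq_right (Dvd.dvd.mul_left (pow_dvd_pow 2 hl2) 3)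
      · have h1 : 2 ^ l ≤ 2 ^ m := Nat.pow_le_pow_right (by norm_num) hl2
        have h2 : 0 < 2 ^ m := Nat.pow_pos (by norm_num)
        show 2 ^ l < 3 * 2 ^ m
        omega
    · constructor
      · exact Nat.gcd_eq_right (mul_dvd_mul_left 3 (pow_dvd_pow 2 (by omega)))
      · have : 2 ^ l < 2 ^ m := Nat.pow_lt_pow_right (by norm_num) (by omega)
        show 3 * 2 ^ l < 3 * 2 ^ m
        omega
  have hinj : Set.InjOn (fun k => Nat.gcd (3 * 2 ^ m) k) K := by
    intro x hx y hy h
    simp only at h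
    by_cases hx0 : x = 0
    · by_cases hy0 : y = 0
      · rw [hx0, hy0]
      · obtain ⟨he, hlt⟩ := hprop y hy hy0
        rw [hx0, Nat.gcd_zero_right, he] at h
        omega
    · by_cases hy0 : y = 0
      · obtain ⟨he, hlt⟩ := hprop x hx hx0
        rw [hy0, Nat.gcd_zero_right, he] at h
        omega
      · obtain ⟨hex, _⟩ := hprop x hx hx0
        obtain ⟨hey, _⟩ := hprop y hy hy0
        rw [hex, hey] at h
        exact h
  rw [Finset.card_image_of_injOn hinj]
  -- now compute card K
  have hA : ((Finset.Icc 1 m).image (fun l => 2 ^ l)).card = m := by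
    rw [Finset.card_image_of_injective _ (Nat.pow_right_injective (le_refl 2))]
    simp
  have hB : ((Finset.Icc 1 (m-1)).image (fun l => 3 * 2 ^ l)).card = m - 1 := by
    have : Function.Injective (fun l : ℕ => 3 * 2 ^ l) := by
      intro a b hab
      have h2 : 2 ^ a = 2 ^ b := by
        have : 3 * 2 ^ a = 3 * 2 ^ b := hab
        omega
      exact Nat.pow_right_injective (le_refl 2) h2
    rw [Finset.card_image_of_injective _ this]
    simp
  have hd1 : Disjoint ({0} : Finset ℕ) ((Finset.Icc 1 m).image (fun l => 2 ^ l)) := by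
    simp only [Finset.disjoint_left, Finset.mem_singleton, Finset.mem_image, Finset.mem_Icc]
    rintro x rfl ⟨l, _, hl⟩
    exact absurd hl (pow_pos (by norm_num : (0:ℕ) < 2) l).ne'
  have hd2 : Disjoint (({0} : Finset ℕ) ∪ (Finset.Icc 1 m).image (fun l => 2 ^ l))
      ((Finset.Icc 1 (m-1)).image (fun l => 3 * 2 ^ l)) := by
    simp only [Finset.disjoint_left, Finset.mem_union, Finset.mem_singleton,
      Finset.mem_image, Finset.mem_Icc]
    rintro x (rfl | ⟨l, ⟨hl1, hl2⟩, rfl⟩) ⟨j, ⟨hj1, hj2⟩, hj⟩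
    · have : 0 < 3 * 2 ^ j := by positivity
      omega
    · have h3 : (3 : ℕ) ∣ 2 ^ l := hj ▸ dvd_mul_right 3 (2 ^ j)
      have hcop : Nat.Coprime 3 (2 ^ l) := Nat.Coprime.pow_right l (by decide)
      have := Nat.Coprime.eq_one_of_dvd hcop h3
      omega
  rw [hK, Finset.card_union_of_disjoint hd2, Finset.card_union_of_disjoint hd1,
    Finset.card_singleton, hA, hB]
  omega
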